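/- Let H_I and H be complex Hilbert spaces, let ι : H_I → H be a linear isometry, let V : H → H be a unitary operator, and let P : H → H be an orthogonal projection (a self-adjoint idempotent bounded operator). For t ∈ ℕ with t ≥ 1, call a vector φ ∈ H_I t-halting if ‖P(V^t(ι φ))‖ = ‖φ‖ and P(V^{t'}(ι φ)) = 0 for every natural number t' with 1 ≤ t' < t. Then: (1) for every t, the set of t-halting vectors is a linear subspace of H_I; and (2) if φ is t-halting and ψ is t'-halting with t ≠ t', then ⟨φ, ψ⟩ = 0. -/

import Mathlib

/-- `THalting ι V P t φ` means: the input vector `φ` is `t`-halting, i.e. at time `t`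
the projection `P` of the evolved global state has full norm (the control is exactly in
the final state), and at every earlier time `1 ≤ t' < t` the projection vanishes. -/
def THalting {H_I H : Type*} [NormedAddCommGroup H_I] [InnerProductSpace ℂ H_I]
    [NormedAddCommGroup H] [InnerProductSpace ℂ H] [CompleteSpace H]
    (ι : H_I →ₗᵢ[ℂ] H) (V : H →L[ℂ] H) (P : H →L[ℂ] H) (t : ℕ) (φ : H_I) : Prop :=
  ‖P ((V ^ t) (ι φ))‖ = ‖φ‖ ∧ ∀ t' : ℕ, 1 ≤ t' → t' < t → P ((V ^ t') (ι φ)) = 0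

/-- For a self-adjoint idempotent `P`, `‖P x‖ = ‖x‖` iff `P x = x`. -/
lemma proj_norm_eq_iff {H : Type*} [NormedAddCommGroup H] [InnerProductSpace ℂ H]
    [CompleteSpace H] (P : H →L[ℂ] H) (hP : IsIdempotentElem P) (hPsa : IsSelfAdjoint P)
    (x : H) : ‖P x‖ = ‖x‖ ↔ P x = x := by
  constructor
  · intro h
    have hPinner : ∀ a b : H, (inner ℂ (P a) b : ℂ) = inner ℂ a (P b) := fun a b => by
      conv_lhs => rw [← hPsa.adjoint_eq]
      exact ContinuousLinearMap.adjoint_inner_left P b a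
    have horth : (inner ℂ (P x) (x - P x) : ℂ) = 0 := by
      rw [hPinner, map_sub]
      have : P (P x) = P x := by
        have := hP
        rw [IsIdempotentElem] at this
        calc P (P x) = (P * P) x := rfl
          _ = P x := by rw [this]
      rw [this, sub_self, inner_zero_right]
    have hx : x = P x + (x - P x) := by abel
    have hnorm : ‖x‖ ^ 2 = ‖P x‖ ^ 2 + ‖x - P x‖ ^ 2 := by
      calc ‖x‖ ^ 2 = ‖P x + (x - P x)‖ ^ 2 := by rw [← hx]
        _ = ‖P x‖ ^ 2 + ‖x - P x‖ ^ 2 := by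
          have := norm_add_sq_eq_norm_sq_add_norm_sq_of_inner_eq_zero _ _ horth
          simpa [sq] using this
    have : ‖x - P x‖ ^ 2 = 0 := by rw [h] at hnorm; linarith
    have : ‖x - P x‖ = 0 := by
      have := sq_eq_zero_iff.mp this
      exact this
    have := norm_eq_zero.mp this
    exact (sub_eq_zero.mp this).symm
  · intro h; rw [h]

theorem halting_subspaces
    {H_I H : Type*} [NormedAddCommGroup H_I] [InnerProductSpace ℂ H_I] [CompleteSpace H_I]
    [NormedAddCommGroup H] [InnerProductSpace ℂ H] [CompleteSpace H]
    (ι : H_I →ₗᵢ[ℂ] H) (V : H →L[ℂ] H) (hV : V ∈ unitary (H →L[ℂ] H))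
    (P : H →L[ℂ] H) (hP : IsIdempotentElem P) (hPsa : IsSelfAdjoint P) :
    (∀ t : ℕ, 1 ≤ t → ∃ S : Submodule ℂ H_I,
        ∀ φ : H_I, φ ∈ S ↔ THalting ι V P t φ) ∧
    (∀ t t' : ℕ, 1 ≤ t → 1 ≤ t' → t ≠ t' → ∀ φ ψ : H_I,
        THalting ι V P t φ → THalting ι V P t' ψ → (inner ℂ φ ψ : ℂ) = 0) := by
  have hVt : ∀ t : ℕ, (V ^ t) ∈ unitary (H →L[ℂ] H) := fun t => pow_mem hV t
  have hnormVt : ∀ (t : ℕ) (x : H), ‖(V ^ t) x‖ = ‖x‖ := fun t x =>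
    ContinuousLinearMap.norm_map_of_mem_unitary (hVt t) x
  have hinnerVt : ∀ (t : ℕ) (x y : H), (inner ℂ ((V ^ t) x) ((V ^ t) y) : ℂ) = inner ℂ x y :=
    fun t x y => ContinuousLinearMap.inner_map_map_of_mem_unitary (hVt t) x y
  -- reformulation of the norm condition
  have key : ∀ (t : ℕ) (φ : H_I),
      ‖P ((V ^ t) (ι φ))‖ = ‖φ‖ ↔ P ((V ^ t) (ι φ)) = (V ^ t) (ι φ) := by
    intro t φ
    rw [← proj_norm_eq_iff P hP hPsa ((V ^ t) (ι φ))]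
    rw [hnormVt t (ι φ), ι.norm_map]
  constructor
  · intro t _
    refine ⟨{
      carrier := {φ | THalting ι V P t φ}
      zero_mem' := by
        constructor
        · simp
        · intro t' _ _; simp
      add_mem' := by
        rintro φ ψ ⟨h1, h2⟩ ⟨h1', h2'⟩
        refine ⟨?_, ?_⟩
        · rw [key] at h1 h1' ⊢
          simp only [map_add, h1, h1']
        · intro t' ht1 ht2
          simp only [map_add, h2 t' ht1 ht2, h2' t' ht1 ht2, add_zero]
      smul_mem' := by
        rintro c φ ⟨h1, h2⟩
        refine ⟨?_, ?_⟩
        · rw [key] at h1 ⊢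
          simp only [map_smul, h1]
        · intro t' ht1 ht2
          simp only [map_smul, h2 t' ht1 ht2, smul_zero] }, fun φ => Iff.rfl⟩
  · intro t t' ht ht' hne φ ψ hφ hψ
    -- wlog t < t'
    rcases lt_or_gt_of_ne hne with h | h
    · -- t < t', so P(V^t ι ψ) = 0, and P(V^t ι φ) = V^t ι φ
      have h1 : P ((V ^ t) (ι φ)) = (V ^ t) (ι φ) := (key t φ).mp hφ.1
      have h2 : P ((V ^ t) (ι ψ)) = 0 := hψ.2 t ht h
      calc (inner ℂ φ ψ : ℂ) = inner ℂ (ι φ) (ι ψ) := (ι.inner_map_map φ ψ).symm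
        _ = inner ℂ ((V ^ t) (ι φ)) ((V ^ t) (ι ψ)) := (hinnerVt t _ _).symm
        _ = inner ℂ (P ((V ^ t) (ι φ))) ((V ^ t) (ι ψ)) := by rw [h1]
        _ = inner ℂ ((V ^ t) (ι φ)) (P ((V ^ t) (ι ψ))) := by
            conv_lhs => rw [← hPsa.adjoint_eq]
            exact ContinuousLinearMap.adjoint_inner_left P _ _
        _ = 0 := by rw [h2, inner_zero_right]
    · have h1 : P ((V ^ t') (ι ψ)) = (V ^ t') (ι ψ) := (key t' ψ).mp hψ.1
      have h2 : P ((V ^ t') (ι φ)) = 0 := hφ.2 t' ht' h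
      calc (inner ℂ φ ψ : ℂ) = inner ℂ (ι φ) (ι ψ) := (ι.inner_map_map φ ψ).symm
        _ = inner ℂ ((V ^ t') (ι φ)) ((V ^ t') (ι ψ)) := (hinnerVt t' _ _).symm
        _ = inner ℂ ((V ^ t') (ι φ)) (P ((V ^ t') (ι ψ))) := by rw [h1]
        _ = inner ℂ (P ((V ^ t') (ι φ))) ((V ^ t') (ι ψ)) := by
            conv_rhs => rw [← hPsa.adjoint_eq]
            exact (ContinuousLinearMap.adjoint_inner_left P _ _).symm
        _ = 0 := by rw [h2, inner_zero_left]
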